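/- arXiv:1406.0670 — 3 statements merged into one kernel-verified Lean document; each statement's English description precedes it below -/
import Mathlib

section
/- The infinite Fibonacci word f contains no fourth power; that is, there do not exist an index i ≥ 0 and an integer n ≥ 1 such that f[i+t] = f[i+n+t] for all t with 0 ≤ t < 3n. -/
/-- The Fibonacci morphism φ: 0 ↦ 01, 1 ↦ 0. -/
def fibPhi (w : List ℕ) : List ℕ := (w.map (fun c => if c = 0 then [0, 1] else [0])).flatten

/-- The infinite Fibonacci word f = 0100101001001⋯, the fixed point of φ starting with 0. -/
def fibWord (i : ℕ) : ℕ := ((fibPhi^[i + 2]) [0]).getD i 0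

/-- A finite word is a factor of the infinite Fibonacci word. -/
def IsFibFactor (x : List ℕ) : Prop :=
  ∃ i : ℕ, x = (List.range x.length).map (fun t => fibWord (i + t))

namespace FibAux

def W (k : ℕ) : List ℕ := fibPhi^[k] [0]

lemma fibPhi_append (a b : List ℕ) : fibPhi (a ++ b) = fibPhi a ++ fibPhi b := by
  simp [fibPhi]

lemma W_succ (k : ℕ) : W (k+1) = fibPhi (W k) := Function.iterate_succ_apply' _ _ _

lemma W_add_two : ∀ k, W (k+2) = W (k+1) ++ W k
  | 0 => by decide
  | (k+1) => calc W (k+1+2) = fibPhi (W (k+2)) := W_succ _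
      _ = fibPhi (W (k+1) ++ W k) := by rw [W_add_two k]
      _ = fibPhi (W (k+1)) ++ fibPhi (W k) := fibPhi_append _ _
      _ = W (k+1+1) ++ W (k+1) := by rw [← W_succ, ← W_succ]

lemma W_prefix (k : ℕ) : W k <+: W (k+1) := by
  cases k with
  | zero => exact ⟨[1], by decide⟩
  | succ k => exact ⟨W k, (W_add_two k).symm⟩

lemma W_prefix_le {k l : ℕ} (h : k ≤ l) : W k <+: W l := by
  induction l with
  | zero => simp [Nat.le_zero.mp h]
  | succ l ih =>
    rcases Nat.lt_or_ge k (l+1) with h' | h'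
    · exact (ih (by omega)).trans (W_prefix l)
    · have : k = l + 1 := by omega
      simp [this]

lemma W_length : ∀ k, k < (W k).length
  | 0 => by decide
  | 1 => by decide
  | (k+2) => by
      rw [W_add_two]
      have h1 := W_length (k+1)
      have h2 := W_length k
      simp only [List.length_append]
      omega

lemma getD_prefix {a b : List ℕ} (h : a <+: b) {i : ℕ} (hi : i < a.length) :
    a.getD i 0 = b.getD i 0 := by
  obtain ⟨t, rfl⟩ := h
  rw [List.getD_append _ _ _ _ hi]

lemma fibWord_eq {k i : ℕ} (h : i < (W k).length) : fibWord i = (W k).getD i 0 := by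
  have h2 : i < (W (i+2)).length := lt_trans (by omega) (W_length (i+2))
  show (W (i+2)).getD i 0 = (W k).getD i 0
  rcases Nat.le_total (i+2) k with hk | hk
  · exact getD_prefix (W_prefix_le hk) h2
  · exact (getD_prefix (W_prefix_le hk) h).symm

lemma fibPhi_mem {w : List ℕ} {c : ℕ} (h : c ∈ fibPhi w) : c = 0 ∨ c = 1 := by
  simp only [fibPhi, List.mem_flatten, List.mem_map] at h
  obtain ⟨l, ⟨x, _, rfl⟩, hc⟩ := h
  by_cases hx : x = 0 <;> simp [hx] at hc <;> tauto

lemma fibWord_values (i : ℕ) : fibWord i = 0 ∨ fibWord i = 1 := by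
  have h2 : i < (W (i+2)).length := lt_trans (by omega) (W_length (i+2))
  have : fibWord i = (W (i+2))[i] := List.getD_eq_getElem _ _ h2
  rw [this]
  have hm : (W (i+2))[i] ∈ W (i+2) := List.getElem_mem _
  have hm2 : (W (i+2))[i] ∈ fibPhi (W (i+1)) := by rw [← W_succ]; exact hm
  exact fibPhi_mem hm2


/-- The length-`j` prefix of the infinite Fibonacci word. -/
def P (j : ℕ) : List ℕ := (List.range j).map fibWord

lemma P_succ (j : ℕ) : P (j+1) = P j ++ [fibWord j] := by
  simp [P, List.range_succ]

lemma P_eq_take {j k : ℕ} (h : j ≤ (W k).length) : P j = (W k).take j := by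
  apply List.ext_getElem
  · simp [P]; omega
  · intro n h1 h2
    simp only [P, List.getElem_map, List.getElem_range, List.getElem_take]
    have hn : n < (W k).length := by simp [P] at h1; omega
    rw [fibWord_eq hn, List.getD_eq_getElem _ _ hn]

def B (j : ℕ) : ℕ := (fibPhi (P j)).length

lemma B_zero : B 0 = 0 := rfl

lemma B_succ (j : ℕ) : B (j+1) = B j + (if fibWord j = 0 then 2 else 1) := by
  rw [B, P_succ, fibPhi_append, List.length_append]
  congr 1
  by_cases h : fibWord j = 0 <;> simp [fibPhi, h]

lemma fibPhi_prefix {a b : List ℕ} (h : a <+: b) : fibPhi a <+: fibPhi b := by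
  obtain ⟨t, rfl⟩ := h
  exact ⟨fibPhi t, (fibPhi_append _ _).symm⟩

/-- The fixed point property: the `j`-th block starts with `0` at position `B j`,
and is `[0,1]` when `fibWord j = 0`. -/
lemma FP (j : ℕ) : fibWord (B j) = 0 ∧ (fibWord j = 0 → fibWord (B j + 1) = 1) := by
  have hlen : j + 1 ≤ (W (j+1)).length := le_of_lt (W_length (j+1))
  have hpre : fibPhi (P (j+1)) <+: W (j+2) := by
    rw [W_succ (j+1)]
    exact fibPhi_prefix (P_eq_take hlen ▸ List.take_prefix _ _)
  obtain ⟨t, ht⟩ := hpre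
  rw [P_succ, fibPhi_append] at ht
  set blk : List ℕ := fibPhi [fibWord j] with hblk
  rw [List.append_assoc] at ht
  have hB : (fibPhi (P j)).length = B j := rfl
  have hblk0 : blk.getD 0 0 = 0 := by
    by_cases h : fibWord j = 0 <;> simp [hblk, fibPhi, h]
  have key : ∀ r, r < blk.length → fibWord (B j + r) = blk.getD r 0 := by
    intro r hr
    have hlen2 : B j + r < (W (j+2)).length := by
      rw [← ht]; simp only [List.length_append]
      omega
    rw [fibWord_eq hlen2, ← ht, List.getD_append_right _ _ _ _ (by omega),
      List.getD_append _ _ _ _ (by omega : B j + r - (fibPhi (P j)).length < blk.length)]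
    congr 1
    omega
  constructor
  · have hl : 0 < blk.length := by
      by_cases h : fibWord j = 0 <;> simp [hblk, fibPhi, h]
    have := key 0 hl
    rw [Nat.add_zero] at this
    rw [this, hblk0]
  · intro h0
    have hl : 1 < blk.length := by simp [hblk, fibPhi, h0]
    rw [key 1 hl]
    simp [hblk, fibPhi, h0]

lemma B_strictMono : StrictMono B := by
  apply strictMono_nat_of_lt_succ
  intro j
  rw [B_succ]
  by_cases h : fibWord j = 0 <;> simp [h]

lemma B_add_le (a d : ℕ) : B a + d ≤ B (a + d) := by
  induction d with
  | zero => simp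
  | succ d ih =>
    have h1 : B (a+d) + 1 ≤ B (a+d+1) := by
      rw [B_succ]; by_cases h : fibWord (a+d) = 0 <;> simp [h]
    have h2 : a + (d+1) = (a+d)+1 := by omega
    rw [h2]
    omega

lemma B_exists (s : ℕ) : ∃ j, B j ≤ s ∧ s < B (j+1) := by
  induction s with
  | zero =>
    refine ⟨0, le_refl _, ?_⟩
    have := B_strictMono (show 0 < 0+1 by omega)
    have hB0 : B 0 = 0 := rfl
    omega
  | succ s ih =>
    obtain ⟨j, h1, h2⟩ := ih
    rcases Nat.lt_or_ge (s+1) (B (j+1)) with h | h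
    · exact ⟨j, by omega, h⟩
    · refine ⟨j+1, by omega, ?_⟩
      have := B_strictMono (show j+1 < j+1+1 by omega)
      omega

lemma B_succ_le (j : ℕ) : B (j+1) ≤ B j + 2 := by
  rw [B_succ]; by_cases h : fibWord j = 0 <;> simp [h]

lemma zero_iff (s : ℕ) : fibWord s = 0 ↔ ∃ j, B j = s := by
  constructor
  · intro h0
    obtain ⟨j, h1, h2⟩ := B_exists s
    rcases eq_or_lt_of_le h1 with h | h
    · exact ⟨j, h⟩
    · exfalso
      have hs : s = B j + 1 := by have := B_succ_le j; omega
      have hstep : fibWord j = 0 := by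
        by_contra hj
        rw [B_succ] at h2
        simp [hj] at h2
        omega
      have := (FP j).2 hstep
      rw [← hs] at this
      omega
  · rintro ⟨j, rfl⟩
    exact (FP j).1

lemma one_decomp {s : ℕ} (h : fibWord s ≠ 0) :
    ∃ j, s = B j + 1 ∧ B (j+1) = s + 1 ∧ fibWord j = 0 := by
  obtain ⟨j, h1, h2⟩ := B_exists s
  have hne : B j ≠ s := fun he => h (he ▸ (FP j).1)
  have hs : s = B j + 1 := by have := B_succ_le j; omega
  have hstep : fibWord j = 0 := by
    by_contra hj
    rw [B_succ] at h2
    simp [hj] at h2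
    omega
  refine ⟨j, hs, ?_, hstep⟩
  rw [B_succ, hs]
  simp [hstep]

lemma no11 {s : ℕ} (h : fibWord s ≠ 0) : fibWord (s+1) = 0 := by
  obtain ⟨j, _, h2, _⟩ := one_decomp h
  exact h2 ▸ (FP (j+1)).1

lemma prev0 {s : ℕ} (h : fibWord s ≠ 0) : 1 ≤ s ∧ fibWord (s-1) = 0 := by
  obtain ⟨j, h1, _, _⟩ := one_decomp h
  constructor
  · omega
  · have : s - 1 = B j := by omega
    exact this ▸ (FP j).1

lemma block_char (j : ℕ) : fibWord j = 0 ↔ fibWord (B j + 1) ≠ 0 := by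
  constructor
  · intro h; rw [(FP j).2 h]; omega
  · intro h
    by_contra hj
    have : B (j+1) = B j + 1 := by rw [B_succ]; simp [hj]
    exact h (this ▸ (FP (j+1)).1)

lemma no000 {s : ℕ} (h0 : fibWord s = 0) (h1 : fibWord (s+1) = 0)
    (h2 : fibWord (s+2) = 0) : False := by
  obtain ⟨j, rfl⟩ := (zero_iff s).mp h0
  have hj : fibWord j ≠ 0 := by
    intro hj0
    have := (FP j).2 hj0
    omega
  have hB1 : B (j+1) = B j + 1 := by rw [B_succ]; simp [hj]
  have hj1 : fibWord (j+1) ≠ 0 := by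
    intro hj10
    have := (FP (j+1)).2 hj10
    rw [hB1, show B j + 1 + 1 = B j + 2 by omega] at this
    omega
  exact hj1 (no11 hj)


lemma L {a k : ℕ} (hk : 2 ≤ k) : B a + k + 1 ≤ B (a + k) := by
  have h2 : B a + 3 ≤ B (a + 2) := by
    by_cases h : fibWord a = 0
    · have e1 : B (a+1) = B a + 2 := by rw [B_succ]; simp [h]
      have e2 := B_add_le (a+1) 1
      have e3 : a + 2 = a + 1 + 1 := by omega
      rw [e3]; omega
    · have h1 : fibWord (a+1) = 0 := no11 h
      have e1 := B_add_le a 1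
      have e2 : B (a+1+1) = B (a+1) + 2 := by rw [B_succ]; simp [h1]
      have e3 : a + 2 = a + 1 + 1 := by omega
      rw [e3]; omega
  have h3 := B_add_le (a+2) (k-2)
  have e : a + 2 + (k-2) = a + k := by omega
  rw [e] at h3
  omega

lemma noQ (n : ℕ) : 1 ≤ n → ∀ p,
    (∀ t, t < 3*n - 1 → fibWord (p + t) = fibWord (p + n + t)) → False := by
  induction n using Nat.strong_induction_on with
  | _ n IH =>
  intro hn p hp
  rcases Nat.lt_or_ge n 2 with hlt2 | h2
  · -- base case n = 1
    have hn1 : n = 1 := by omega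
    subst hn1
    have h0 := hp 0 (by omega)
    have h1 := hp 1 (by omega)
    simp only [Nat.add_zero] at h0
    rw [show p + 1 + 1 = p + 2 by omega] at h1
    rcases fibWord_values p with hv | hv
    · have a1 : fibWord (p+1) = 0 := by rw [← h0]; exact hv
      have a2 : fibWord (p+2) = 0 := by rw [← h1]; exact a1
      exact no000 hv a1 a2
    · have := no11 (s := p) (by omega)
      omega
  · -- n ≥ 2 : descent
    have stepA : ∃ q, fibWord q = 0 ∧
        ∀ t, t < 3*n - 1 → fibWord (q + t) = fibWord (q + n + t) := by
      by_cases h : fibWord p = 0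
      · exact ⟨p, h, hp⟩
      · obtain ⟨hp1, hp0⟩ := prev0 h
        refine ⟨p - 1, hp0, ?_⟩
        intro t ht
        cases t with
        | zero =>
          have hpn : fibWord (p + n) ≠ 0 := by
            have h00 := hp 0 (by omega)
            simp only [Nat.add_zero] at h00
            rw [← h00]; exact h
          obtain ⟨hpn1, hpn0⟩ := prev0 hpn
          have e1 : p - 1 + 0 = p - 1 := by omega
          have e2 : p - 1 + n + 0 = p + n - 1 := by omega
          rw [e1, e2, hp0, hpn0]
        | succ t =>
          have hh := hp t (by omega)
          have e1 : p - 1 + (t+1) = p + t := by omega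
          have e2 : p - 1 + n + (t+1) = p + n + t := by omega
          rw [e1, e2]; exact hh
    obtain ⟨q, hq0, hq⟩ := stepA
    obtain ⟨j, hj⟩ := (zero_iff q).mp hq0
    have hqn0 : fibWord (q + n) = 0 := by
      have h00 := hq 0 (by omega)
      simp only [Nat.add_zero] at h00
      rw [← h00]; exact hq0
    obtain ⟨j2, hj2⟩ := (zero_iff (q+n)).mp hqn0
    have hBlt : B j < B j2 := by omega
    have hjlt : j < j2 := B_strictMono.lt_iff_lt.mp hBlt
    set m := j2 - j with hm
    have hjm : j2 = j + m := by omega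
    have hm1 : 1 ≤ m := by omega
    have hBm : B (j + m) = B j + n := by rw [← hjm, hj2, hj]
    have hmono : ∀ a b : ℕ, a ≤ b → B a ≤ B b := fun a b h => B_strictMono.monotone h
    have hmn : m < n := by
      rcases Nat.lt_or_ge m 2 with hm2 | hm2
      · omega
      · have := L (a := j) hm2
        omega
    have CD : ∀ u, u ≤ 3*m - 2 →
        B (j+m+u) = B (j+u) + n ∧ fibWord (j+u) = fibWord (j+m+u) := by
      intro u
      induction u using Nat.strong_induction_on with
      | _ u ihu =>
      intro hu
      have hC : B (j+m+u) = B (j+u) + n := by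
        cases u with
        | zero => simp only [Nat.add_zero]; exact hBm
        | succ v =>
          obtain ⟨hCv, hDv⟩ := ihu v (by omega) (by omega)
          have e1 : j+m+(v+1) = (j+m+v)+1 := by omega
          have e2 : j+(v+1) = (j+v)+1 := by omega
          rw [e1, e2, B_succ, B_succ, hCv, hDv]
          ring
      have hbound : B (j+u) + 1 + 1 ≤ q + 3*n - 1 := by
        rcases le_or_gt u m with h1 | h1
        · have := hmono (j+u) (j+m) (by omega)
          omega
        · rcases le_or_gt u (2*m) with h2m | h2m
          · have hm2 : 2 ≤ m := by omega
            have hn3 : m + 1 ≤ n := by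
              have := L (a := j) hm2
              omega
            obtain ⟨hCv, _⟩ := ihu (u - m) (by omega) (by omega)
            have e : j + m + (u - m) = j + u := by omega
            rw [e] at hCv
            have := hmono (j+(u-m)) (j+m) (by omega)
            omega
          · have hm3 : 3 ≤ m := by omega
            obtain ⟨hC1, _⟩ := ihu (u - m) (by omega) (by omega)
            obtain ⟨hC2, _⟩ := ihu (u - 2*m) (by omega) (by omega)
            have e1 : j + m + (u - m) = j + u := by omega
            have e2 : j + m + (u - 2*m) = j + (u - m) := by omega
            rw [e1] at hC1
            rw [e2] at hC2
            have hL : B (j + (u - 2*m)) + (m - (u - 2*m)) + 1 ≤ B (j + m) := by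
              have hh := L (a := j + (u - 2*m)) (k := m - (u - 2*m)) (by omega)
              have e3 : j + (u - 2*m) + (m - (u - 2*m)) = j + m := by omega
              rw [e3] at hh
              exact hh
            omega
      have hge : q ≤ B (j+u) := by
        have := hmono j (j+u) (by omega); omega
      have hwin : fibWord (B (j+u) + 1) = fibWord (B (j+u) + 1 + n) := by
        have hh := hq (B (j+u) + 1 - q) (by omega)
        have e1 : q + (B (j+u) + 1 - q) = B (j+u) + 1 := by omega
        have e2 : q + n + (B (j+u) + 1 - q) = B (j+u) + 1 + n := by omega
        rw [e1, e2] at hh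
        exact hh
      have hD : fibWord (j+u) = fibWord (j+m+u) := by
        have c1 := block_char (j+u)
        have c2 := block_char (j+m+u)
        rw [hC, show B (j+u) + n + 1 = B (j+u) + 1 + n by omega] at c2
        have hiff : fibWord (j+u) = 0 ↔ fibWord (j+m+u) = 0 := by
          constructor
          · intro h; exact c2.mpr (by rw [← hwin]; exact c1.mp h)
          · intro h; exact c1.mpr (by rw [hwin]; exact c2.mp h)
        rcases fibWord_values (j+u) with v1 | v1 <;>
          rcases fibWord_values (j+m+u) with v2 | v2
        · rw [v1, v2]
        · exact absurd (hiff.mp v1) (by omega)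
        · exact absurd (hiff.mpr v2) (by omega)
        · rw [v1, v2]
      exact ⟨hC, hD⟩
    exact IH m hmn hm1 j (fun t ht => (CD t (by omega)).2)

end FibAux


/-- The infinite Fibonacci word contains no fourth power. -/
theorem fibWord_no_fourth_power :
    ¬ ∃ i n : ℕ, 1 ≤ n ∧ ∀ t < 3 * n, fibWord (i + t) = fibWord (i + n + t) := by
  rintro ⟨i, n, hn, h⟩
  exact FibAux.noQ n hn i (fun t ht => h t (by omega))
end

section
/- Every cube occurring as a factor of the infinite Fibonacci word f has order F_n for some n ≥ 4, and conversely for every n ≥ 4 the word f contains a cube of order F_n. Equivalently: for n ≥ 1 there exists an index i with f[i+t] = f[i+n+t] for all 0 ≤ t < 2n if and only if n = F_m for some m ≥ 4. -/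
def fibS (k : ℕ) : List ℕ := fibPhi^[k] [0]

lemma fibPhi_append (a b : List ℕ) : fibPhi (a ++ b) = fibPhi a ++ fibPhi b := by
  simp [fibPhi]

lemma fibS_succ_succ (k : ℕ) : fibS (k+2) = fibS (k+1) ++ fibS k := by
  induction k with
  | zero => decide
  | succ k ih =>
      have h1 : fibS (k+3) = fibPhi (fibS (k+2)) := by
        simp [fibS, Function.iterate_succ_apply']
      have h2 : fibS (k+2) = fibPhi (fibS (k+1)) := by
        simp [fibS, Function.iterate_succ_apply']
      have h3 : fibS (k+1) = fibPhi (fibS k) := by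
        simp [fibS, Function.iterate_succ_apply']
      have h4 := congrArg fibPhi ih
      rw [fibPhi_append] at h4
      rw [h1, h4, ← h2, ← h3]

lemma fibS_length (k : ℕ) : (fibS k).length = Nat.fib (k+2) := by
  induction k using Nat.twoStepInduction with
  | zero => decide
  | one => decide
  | more k ih1 ih2 =>
      rw [fibS_succ_succ, List.length_append, ih1, ih2]
      have h2 : Nat.fib (k+2+2) = Nat.fib (k+2) + Nat.fib (k+2+1) := Nat.fib_add_two
      have h3 : Nat.fib (k+2+1) = Nat.fib (k+1+2) := rfl
      omega

lemma fibS_prefix (k : ℕ) : fibS k <+: fibS (k+1) := by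
  cases k with
  | zero => decide
  | succ k => rw [fibS_succ_succ]; exact List.prefix_append _ _

lemma fibS_prefix_le {k k' : ℕ} (h : k ≤ k') : fibS k <+: fibS k' := by
  induction k' with
  | zero => cases Nat.le_zero.mp h; exact List.prefix_refl _
  | succ k' ih =>
      rcases Nat.lt_or_ge k (k'+1) with h' | h'
      · exact (ih (by omega)).trans (fibS_prefix k')
      · have : k = k' + 1 := by omega
        subst this; exact List.prefix_refl _

lemma getD_prefix {l l' : List ℕ} (h : l <+: l') {i : ℕ} (hi : i < l.length) :
    l'.getD i 0 = l.getD i 0 := by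
  obtain ⟨t, rfl⟩ := h
  exact List.getD_append _ _ _ _ hi

lemma fib_ge (k : ℕ) : k + 1 ≤ Nat.fib (k+2) := by
  induction k with
  | zero => decide
  | succ k ih =>
      have h1 : 1 ≤ Nat.fib (k+1) := Nat.fib_pos.mpr (by omega)
      have h2 : Nat.fib (k+1+2) = Nat.fib (k+1) + Nat.fib (k+1+1) := Nat.fib_add_two
      have h3 : Nat.fib (k+1+1) = Nat.fib (k+2) := rfl
      omega

lemma fibWord_eq_fibS {i k : ℕ} (hi : i < Nat.fib (k+2)) :
    fibWord i = (fibS k).getD i 0 := by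
  have h0 : fibWord i = (fibS (i+2)).getD i 0 := rfl
  rcases Nat.le_total (i+2) k with h | h
  · refine h0.trans (getD_prefix (fibS_prefix_le h) ?_).symm
    rw [fibS_length]; have := fib_ge (i+2); omega
  · exact h0.trans (getD_prefix (fibS_prefix_le h) (by rw [fibS_length]; exact hi))

lemma cube_identity (a : ℕ) :
    fibS (a+7) = (fibS (a+4) ++ (fibS (a+3) ++ fibS (a+3) ++ fibS (a+3))) ++
      (fibS a ++ fibS (a+1) ++ fibS (a+2) ++ fibS (a+3)) := by
  have e2 : fibS (a+2) = fibS (a+1) ++ fibS a := fibS_succ_succ a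
  have e3 : fibS (a+3) = fibS (a+2) ++ fibS (a+1) := fibS_succ_succ (a+1)
  have e4 : fibS (a+4) = fibS (a+3) ++ fibS (a+2) := fibS_succ_succ (a+2)
  have e5 : fibS (a+5) = fibS (a+4) ++ fibS (a+3) := fibS_succ_succ (a+3)
  have e6 : fibS (a+6) = fibS (a+5) ++ fibS (a+4) := fibS_succ_succ (a+4)
  have e7 : fibS (a+7) = fibS (a+6) ++ fibS (a+5) := fibS_succ_succ (a+5)
  rw [e7, e6, e5, e4, e3, e2]
  simp [List.append_assoc]

lemma cube_prefix (b : ℕ) :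
    (fibS (b+3) ++ (fibS (b+2) ++ fibS (b+2) ++ fibS (b+2))) <+: fibS (b+6) := by
  cases b with
  | zero => decide
  | succ b => exact ⟨_, (cube_identity b).symm⟩

lemma getD_cube_shift (B : List ℕ) (u : ℕ) (hu : u < 2 * B.length) :
    (B ++ B ++ B).getD u 0 = (B ++ B ++ B).getD (B.length + u) 0 := by
  rcases Nat.lt_or_ge u B.length with h | h
  · rw [List.getD_append _ _ _ _ (by simp only [List.length_append]; omega),
        List.getD_append _ _ _ _ h,
        List.getD_append _ _ _ _ (by simp only [List.length_append]; omega),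
        List.getD_append_right _ _ _ _ (by omega)]
    congr 1
    omega
  · rw [List.getD_append _ _ _ _ (by simp only [List.length_append]; omega),
        List.getD_append_right _ _ _ _ h,
        List.getD_append_right _ _ _ _ (by simp only [List.length_append]; omega)]
    congr 1
    simp only [List.length_append]
    omega

lemma exists_cube (b t : ℕ) (ht : t < 2 * Nat.fib (b+4)) :
    fibWord (Nat.fib (b+5) + t) = fibWord (Nat.fib (b+5) + Nat.fib (b+4) + t) := by
  set A := fibS (b+3) with hAdef
  set B := fibS (b+2) with hBdef
  set C := B ++ B ++ B with hCdef
  have hA : A.length = Nat.fib (b+5) := fibS_length (b+3)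
  have hB : B.length = Nat.fib (b+4) := fibS_length (b+2)
  have hp : A ++ C <+: fibS (b+6) := cube_prefix b
  have hlen : (A ++ C).length = A.length + 3 * B.length := by
    simp only [hCdef, List.length_append]; omega
  have hfib : (fibS (b+6)).length = Nat.fib (b+8) := fibS_length (b+6)
  have hle : (A ++ C).length ≤ Nat.fib (b+8) := by
    rw [← hfib]; exact hp.length_le
  have key : ∀ u, u < 3 * B.length →
      fibWord (A.length + u) = C.getD u 0 := by
    intro u hu
    have h1 : A.length + u < Nat.fib (b+8) := by omega
    rw [fibWord_eq_fibS h1, getD_prefix hp (by omega),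
        List.getD_append_right _ _ _ _ (by omega)]
    congr 1
    omega
  have ht' : t < 2 * B.length := by omega
  have e1 : Nat.fib (b+5) + t = A.length + t := by omega
  have e2 : Nat.fib (b+5) + Nat.fib (b+4) + t = A.length + (B.length + t) := by omega
  rw [e1, e2, key t (by omega), key (B.length + t) (by omega)]
  exact getD_cube_shift B t ht'
noncomputable def fα : ℝ := (3 - Real.sqrt 5)/2
noncomputable def fβ : ℝ := (Real.sqrt 5 - 1)/2

lemma sqrt5_sq : Real.sqrt 5 ^ 2 = 5 := Real.sq_sqrt (by norm_num)

lemma sqrt5_lb : 2.236 < Real.sqrt 5 := by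
  nlinarith [sqrt5_sq, Real.sqrt_nonneg 5]

lemma sqrt5_ub : Real.sqrt 5 < 2.2361 := by
  nlinarith [sqrt5_sq, Real.sqrt_nonneg 5]

lemma alpha_lb : 0.38195 < fα := by unfold fα; nlinarith [sqrt5_ub]
lemma alpha_ub : fα < 0.382 := by unfold fα; nlinarith [sqrt5_lb]
lemma beta_lb : 0.6180 < fβ := by unfold fβ; nlinarith [sqrt5_lb]
lemma beta_ub : fβ < 0.61805 := by unfold fβ; nlinarith [sqrt5_ub]
lemma alpha_pos : 0 < fα := by linarith [alpha_lb]
lemma beta_pos : 0 < fβ := by linarith [beta_lb]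
lemma beta_lt_one : fβ < 1 := by linarith [beta_ub]
lemma alpha_add_beta : fα + fβ = 1 := by unfold fα fβ; ring
lemma alpha_le_beta : fα ≤ fβ := by linarith [alpha_ub, beta_lb]
lemma beta_sq : fβ^2 = 1 - fβ := by
  unfold fβ; linear_combination (1/4 : ℝ) * sqrt5_sq

lemma fibId : ∀ k : ℕ, (Nat.fib (k+2) : ℝ) * fα = (Nat.fib k : ℝ) + (-fβ)^(k+2) := by
  intro k
  induction k using Nat.twoStepInduction with
  | zero =>
      show (Nat.fib 2 : ℝ) * fα = (Nat.fib 0 : ℝ) + (-fβ)^2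
      rw [show Nat.fib 2 = 1 from rfl, show Nat.fib 0 = 0 from rfl]
      push_cast
      unfold fα fβ
      linear_combination (-1/4 : ℝ) * sqrt5_sq
  | one =>
      show (Nat.fib 3 : ℝ) * fα = (Nat.fib 1 : ℝ) + (-fβ)^3
      rw [show Nat.fib 3 = 2 from rfl, show Nat.fib 1 = 1 from rfl]
      push_cast
      unfold fα fβ
      linear_combination ((Real.sqrt 5 - 3)/8) * sqrt5_sq
  | more k ih1 ih2 =>
      have hrec : (Nat.fib (k+2+2) : ℝ) = (Nat.fib (k+2) : ℝ) + (Nat.fib (k+2+1) : ℝ) := by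
        rw [Nat.fib_add_two]; push_cast; ring
      have hrec2 : (Nat.fib (k+2) : ℝ) = (Nat.fib k : ℝ) + (Nat.fib (k+1) : ℝ) := by
        rw [Nat.fib_add_two]; push_cast; ring
      have ih2' : (Nat.fib (k+2+1) : ℝ) * fα = (Nat.fib (k+1) : ℝ) + (-fβ)^(k+2+1) := ih2
      have hp2 : (-fβ)^(k+2+2) = (-fβ)^(k+2) + (-fβ)^(k+2+1) := by
        have h : (-fβ)^(k+2+2) = (-fβ)^(k+2) * fβ^2 := by ring
        rw [h, beta_sq]; ring
      rw [hrec, add_mul, ih1, ih2', hrec2, hp2]; ring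

lemma fib_det (K : ℕ) :
    (Nat.fib (K+2) : ℤ) * (Nat.fib (K+1) : ℤ) - (Nat.fib (K+3) : ℤ) * (Nat.fib K : ℤ) = (-1)^K := by
  induction K with
  | zero => decide
  | succ K ih =>
      have hF2 : (Nat.fib (K+2) : ℤ) = (Nat.fib K : ℤ) + (Nat.fib (K+1) : ℤ) := by
        exact_mod_cast congrArg (Nat.cast (R := ℤ)) (Nat.fib_add_two (n := K))
      have hF3 : (Nat.fib (K+3) : ℤ) = (Nat.fib (K+1) : ℤ) + (Nat.fib (K+2) : ℤ) := by
        exact_mod_cast congrArg (Nat.cast (R := ℤ)) (Nat.fib_add_two (n := K+1))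
      have hF4 : (Nat.fib (K+4) : ℤ) = (Nat.fib (K+2) : ℤ) + (Nat.fib (K+3) : ℤ) := by
        exact_mod_cast congrArg (Nat.cast (R := ℤ)) (Nat.fib_add_two (n := K+2))
      show (Nat.fib (K+3) : ℤ) * (Nat.fib (K+2) : ℤ) - (Nat.fib (K+4) : ℤ) * (Nat.fib (K+1) : ℤ) = (-1)^(K+1)
      rw [hF4, hF3]
      linear_combination (-1 : ℤ) * ih + ((Nat.fib (K+1) : ℤ) + (Nat.fib (K+2) : ℤ)) * hF2 - (Nat.fib K : ℤ) * hF3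

lemma decomp_ex (K : ℕ) (r p : ℤ) : ∃ a b : ℤ,
    r = a * (Nat.fib (K+2) : ℤ) + b * (Nat.fib (K+3) : ℤ) ∧
    p = a * (Nat.fib K : ℤ) + b * (Nat.fib (K+1) : ℤ) := by
  have hd := fib_det K
  rcases Nat.even_or_odd K with he | ho
  · rw [he.neg_one_pow] at hd
    refine ⟨r * (Nat.fib (K+1) : ℤ) - p * (Nat.fib (K+3) : ℤ),
            p * (Nat.fib (K+2) : ℤ) - r * (Nat.fib K : ℤ), ?_, ?_⟩
    · linear_combination (-r) * hd
    · linear_combination (-p) * hd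
  · rw [ho.neg_one_pow] at hd
    refine ⟨-(r * (Nat.fib (K+1) : ℤ) - p * (Nat.fib (K+3) : ℤ)),
            -(p * (Nat.fib (K+2) : ℤ) - r * (Nat.fib K : ℤ)), ?_, ?_⟩
    · linear_combination r * hd
    · linear_combination p * hd

lemma decomp_val (K : ℕ) (r p a b : ℤ)
    (h1 : r = a * (Nat.fib (K+2) : ℤ) + b * (Nat.fib (K+3) : ℤ))
    (h2 : p = a * (Nat.fib K : ℤ) + b * (Nat.fib (K+1) : ℤ)) :
    (r:ℝ) * fα - (p:ℝ) = (-fβ)^(K+2) * ((a:ℝ) + (b:ℝ) * (-fβ)) := by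
  have i1 := fibId K
  have i2 : (Nat.fib (K+3) : ℝ) * fα = (Nat.fib (K+1) : ℝ) + (-fβ)^(K+3) := fibId (K+1)
  have h1R : (r:ℝ) = (a:ℝ) * (Nat.fib (K+2) : ℝ) + (b:ℝ) * (Nat.fib (K+3) : ℝ) := by
    exact_mod_cast h1
  have h2R : (p:ℝ) = (a:ℝ) * (Nat.fib K : ℝ) + (b:ℝ) * (Nat.fib (K+1) : ℝ) := by
    exact_mod_cast h2
  linear_combination fα * h1R - h2R + (a:ℝ) * i1 + (b:ℝ) * i2

lemma int_of_real_gt {a : ℤ} (h : (-1 : ℝ) < (a:ℝ)) : 0 ≤ a := by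
  have : (-1 : ℤ) < a := by exact_mod_cast h
  omega

lemma int_of_real_lt {a : ℤ} (h : (a:ℝ) < 1) : a ≤ 0 := by
  have : a < (1 : ℤ) := by exact_mod_cast h
  omega

lemma BAL (M : ℕ) (hM : 2 ≤ M) (r : ℕ) (hr1 : 1 ≤ r) (hr2 : r < Nat.fib (M+1)) (p : ℤ) :
    fβ^M ≤ |(r:ℝ) * fα - (p:ℝ)| := by
  by_contra hcon
  push_neg at hcon
  obtain ⟨K, rfl⟩ : ∃ K, M = K + 2 := ⟨M - 2, by omega⟩
  obtain ⟨a, b, h1, h2⟩ := decomp_ex K (r : ℤ) p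
  have h3 := decomp_val K (r : ℤ) p a b h1 h2
  push_cast at h3
  rw [h3] at hcon
  have hψ : |(-fβ)^(K+2)| = fβ^(K+2) := by
    rw [abs_pow, abs_neg, abs_of_pos beta_pos]
  rw [abs_mul, hψ] at hcon
  have hpow : (0:ℝ) < fβ^(K+2) := pow_pos beta_pos _
  have habs : |(a:ℝ) + (b:ℝ) * (-fβ)| < 1 := by
    nlinarith [abs_nonneg ((a:ℝ) + (b:ℝ) * (-fβ))]
  rw [abs_lt] at habs
  obtain ⟨hl, hu⟩ := habs
  -- integer facts
  have hF2nn : (0:ℤ) ≤ (Nat.fib (K+2) : ℤ) := Int.natCast_nonneg _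
  have hF3pos : (1:ℤ) ≤ (Nat.fib (K+3) : ℤ) := by
    exact_mod_cast Nat.fib_pos.mpr (by omega)
  have hrlt : (r:ℤ) < (Nat.fib (K+3) : ℤ) := by exact_mod_cast hr2
  have hrge : (1:ℤ) ≤ (r:ℤ) := by exact_mod_cast hr1
  rcases lt_trichotomy b 0 with hb | hb | hb
  · -- b ≤ -1 : a ≤ 0, r ≤ -F3 < 0
    have hb' : b ≤ -1 := by omega
    have hbR : (b:ℝ) ≤ -1 := by exact_mod_cast hb'
    have ha : (a:ℝ) < 1 := by nlinarith [beta_pos, beta_ub]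
    have ha' : a ≤ 0 := int_of_real_lt ha
    nlinarith [h1, mul_nonpos_of_nonpos_of_nonneg ha' hF2nn]
  · -- b = 0 : |a| < 1 so a = 0 so r = 0
    subst hb
    push_cast at hl hu h1
    have ha1 : (-1:ℝ) < (a:ℝ) := by linarith
    have ha2 : (a:ℝ) < 1 := by linarith
    have h0 : a = 0 := by
      have := int_of_real_gt ha1; have := int_of_real_lt ha2; omega
    subst h0
    norm_num at h1
    omega
  · -- b ≥ 1 : a ≥ 0, r ≥ F3
    have hb' : 1 ≤ b := by omega
    have hbR : (1:ℝ) ≤ (b:ℝ) := by exact_mod_cast hb'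
    have ha : (-1:ℝ) < (a:ℝ) := by nlinarith [beta_pos, beta_lt_one]
    have ha' : 0 ≤ a := int_of_real_gt ha
    nlinarith [h1, mul_nonneg ha' hF2nn]

lemma uniq (M : ℕ) (n : ℕ) (p : ℤ) (h1 : Nat.fib (M+4) ≤ n) (h2 : n < Nat.fib (M+5))
    (h : |(n:ℝ) * fα - (p:ℝ)| ≤ fβ^(M+3)) : n = Nat.fib (M+4) := by
  obtain ⟨a, b, e1, e2⟩ := decomp_ex (M+1) (n : ℤ) p
  have e3 := decomp_val (M+1) (n : ℤ) p a b e1 e2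
  push_cast at e3
  rw [e3] at h
  have hψ : |(-fβ)^(M+1+2)| = fβ^(M+3) := by
    rw [abs_pow, abs_neg, abs_of_pos beta_pos]
  rw [abs_mul, hψ] at h
  have hpow : (0:ℝ) < fβ^(M+3) := pow_pos beta_pos _
  have habs : |(a:ℝ) + (b:ℝ) * (-fβ)| ≤ 1 := by
    nlinarith [abs_nonneg ((a:ℝ) + (b:ℝ) * (-fβ))]
  rw [abs_le] at habs
  obtain ⟨hl, hu⟩ := habs
  have hF3 : (Nat.fib (M+1+2) : ℤ) = (Nat.fib (M+3) : ℤ) := by norm_num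
  have hF4 : (Nat.fib (M+1+3) : ℤ) = (Nat.fib (M+4) : ℤ) := by norm_num
  rw [hF3, hF4] at e1
  -- fib facts
  have hf3pos : (1:ℤ) ≤ (Nat.fib (M+3) : ℤ) := by exact_mod_cast Nat.fib_pos.mpr (by omega)
  have hf34 : (Nat.fib (M+3) : ℤ) < (Nat.fib (M+4) : ℤ) := by
    exact_mod_cast Nat.fib_lt_fib_succ (n := M+3) (by omega)
  have hf5 : (Nat.fib (M+5) : ℤ) = (Nat.fib (M+3) : ℤ) + (Nat.fib (M+4) : ℤ) := by
    exact_mod_cast congrArg (Nat.cast (R := ℤ)) (Nat.fib_add_two (n := M+3))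
  have hn1 : (Nat.fib (M+4) : ℤ) ≤ (n:ℤ) := by exact_mod_cast h1
  have hn2 : (n:ℤ) < (Nat.fib (M+5) : ℤ) := by exact_mod_cast h2
  rcases lt_trichotomy b 0 with hb | hb | hb
  · have hb' : b ≤ -1 := by omega
    have hbR : (b:ℝ) ≤ -1 := by exact_mod_cast hb'
    have ha : (a:ℝ) < 1 := by nlinarith [beta_pos, beta_ub]
    have ha' : a ≤ 0 := int_of_real_lt ha
    exfalso
    have hfz : (0:ℤ) ≤ (Nat.fib (M+3) : ℤ) := by omega
    nlinarith [e1, mul_nonpos_of_nonpos_of_nonneg ha' hfz]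
  · subst hb
    push_cast at hl hu e1
    have hai1 : (-1:ℤ) ≤ a := by
      have : (-1:ℝ) ≤ (a:ℝ) := by linarith
      exact_mod_cast this
    have hai2 : a ≤ (1:ℤ) := by
      have : (a:ℝ) ≤ 1 := by linarith
      exact_mod_cast this
    interval_cases a <;> omega
  · have hb' : 1 ≤ b := by omega
    have hbR : (1:ℝ) ≤ (b:ℝ) := by exact_mod_cast hb'
    have ha : (-1:ℝ) < (a:ℝ) := by nlinarith [beta_pos, beta_lt_one]
    have ha' : 0 ≤ a := int_of_real_gt ha
    rcases lt_trichotomy b 1 with hb1 | hb1 | hb1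
    · omega
    · subst hb1
      rcases Nat.eq_zero_or_pos a.toNat with ha0 | ha0
      · have h00 : a = 0 := by omega
        subst h00
        have : (n:ℤ) = (Nat.fib (M+4) : ℤ) := by linarith [e1]
        exact_mod_cast this
      · have ha1 : 1 ≤ a := by omega
        exfalso
        nlinarith [e1]
    · have hb2 : 2 ≤ b := by omega
      have ha1 : 1 ≤ a := by
        have h2R : (2:ℝ) ≤ (b:ℝ) := by exact_mod_cast hb2
        have : (0:ℝ) < (a:ℝ) := by nlinarith [beta_lb]
        have : (0:ℤ) < a := by exact_mod_cast this
        omega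
      exfalso
      nlinarith [e1]

lemma beta_pow_split (k : ℕ) : fβ^(k+1) = fβ^(k+2) + fβ^(k+3) := by
  have h : fβ^(k+3) = fβ^(k+1) * fβ^2 := by ring
  rw [h, beta_sq]; ring

lemma gap : ∀ (M : ℕ) (x : ℝ) (i : ℕ), ∃ j : ℕ, i ≤ j ∧ j < i + Nat.fib (M+3) ∧
    ∃ p : ℤ, x ≤ (j:ℝ) * fα - (p:ℝ) ∧ (j:ℝ) * fα - (p:ℝ) ≤ x + fβ^(M+1) := by
  intro M
  induction M with
  | zero =>
      intro x i
      set t := Int.fract ((i:ℝ) * fα - x) with ht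
      have ht0 : 0 ≤ t := Int.fract_nonneg _
      have ht1 : t < 1 := Int.fract_lt_one _
      have hsplit : (i:ℝ) * fα - x = (⌊(i:ℝ) * fα - x⌋ : ℝ) + t := by
        rw [ht]; linarith [Int.floor_add_fract ((i:ℝ) * fα - x)]
      have hb1 : fβ^(0+1) = fβ := by norm_num
      rcases le_or_gt t fβ with hc | hc
      · refine ⟨i, le_refl i, ?_, ⌊(i:ℝ) * fα - x⌋, ?_, ?_⟩
        · have hf3 : Nat.fib (0+3) = 2 := rfl
          omega
        · linarith [hsplit]
        · rw [hb1]; linarith [hsplit]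
      · refine ⟨i+1, by omega, ?_, ⌊(i:ℝ) * fα - x⌋ + 1, ?_, ?_⟩
        · have hf3 : Nat.fib (0+3) = 2 := rfl
          omega
        · push_cast
          have hab : fα + fβ = 1 := alpha_add_beta
          nlinarith [hsplit]
        · push_cast
          rw [hb1]
          have hab : fα + fβ = 1 := alpha_add_beta
          nlinarith [hsplit, alpha_le_beta]
  | succ M ih =>
      intro x i
      have hfib : Nat.fib (M+1+3) = Nat.fib (M+3) + Nat.fib (M+2) := by
        have h := Nat.fib_add_two (n := M+2)
        have e : Nat.fib (M+2+2) = Nat.fib (M+1+3) := rfl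
        have e2 : Nat.fib (M+2+1) = Nat.fib (M+3) := rfl
        omega
      have hId : (Nat.fib (M+2) : ℝ) * fα = (Nat.fib M : ℝ) + (-fβ)^(M+2) := fibId M
      have hsplit := beta_pow_split M
      have hpow2 : (0:ℝ) < fβ^(M+2) := pow_pos beta_pos _
      have hpow3 : (0:ℝ) < fβ^(M+3) := pow_pos beta_pos _
      have hpowlt : fβ^(M+3) < fβ^(M+2) := by
        have h : fβ^(M+3) = fβ^(M+2) * fβ := by ring
        nlinarith [beta_lt_one, beta_pos, hpow2]
      rcases Nat.even_or_odd (M+2) with he | ho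
      · -- ψ^(M+2) = β^(M+2) > 0 ; extend left
        have hψ : (-fβ)^(M+2) = fβ^(M+2) := he.neg_pow fβ
        obtain ⟨j, hj1, hj2, p, hp1, hp2⟩ := ih (x - fβ^(M+3)) i
        rcases le_or_gt x ((j:ℝ) * fα - (p:ℝ)) with hcase | hcase
        · exact ⟨j, hj1, by omega, p, hcase, by linarith⟩
        · refine ⟨j + Nat.fib (M+2), by omega, by omega, p + (Nat.fib M : ℤ), ?_, ?_⟩
          · push_cast
            have : ((j:ℝ) + (Nat.fib (M+2) : ℝ)) * fα - ((p:ℝ) + (Nat.fib M : ℝ))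
                = ((j:ℝ) * fα - (p:ℝ)) + fβ^(M+2) := by
              rw [add_mul]
              linarith [hId, hψ]
            rw [this]
            linarith
          · push_cast
            have : ((j:ℝ) + (Nat.fib (M+2) : ℝ)) * fα - ((p:ℝ) + (Nat.fib M : ℝ))
                = ((j:ℝ) * fα - (p:ℝ)) + fβ^(M+2) := by
              rw [add_mul]
              linarith [hId, hψ]
            rw [this]
            linarith
      · -- ψ^(M+2) = -β^(M+2) ; extend right
        have hψ : (-fβ)^(M+2) = -fβ^(M+2) := ho.neg_pow fβ
        obtain ⟨j, hj1, hj2, p, hp1, hp2⟩ := ih x i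
        rcases le_or_gt ((j:ℝ) * fα - (p:ℝ)) (x + fβ^(M+2)) with hcase | hcase
        · exact ⟨j, hj1, by omega, p, hp1, hcase⟩
        · refine ⟨j + Nat.fib (M+2), by omega, by omega, p + (Nat.fib M : ℤ), ?_, ?_⟩
          · push_cast
            have heq : ((j:ℝ) + (Nat.fib (M+2) : ℝ)) * fα - ((p:ℝ) + (Nat.fib M : ℝ))
                = ((j:ℝ) * fα - (p:ℝ)) - fβ^(M+2) := by
              rw [add_mul]
              linarith [hId, hψ]
            rw [heq]
            linarith
          · push_cast
            have heq : ((j:ℝ) + (Nat.fib (M+2) : ℝ)) * fα - ((p:ℝ) + (Nat.fib M : ℝ))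
                = ((j:ℝ) * fα - (p:ℝ)) - fβ^(M+2) := by
              rw [add_mul]
              linarith [hId, hψ]
            rw [heq]
            linarith

lemma floor_aux (y c : ℝ) (h1 : 0 ≤ Int.fract y + c) (h2 : Int.fract y + c < 1) :
    ⌊y + c⌋ = ⌊y⌋ := by
  have he : y + c = (⌊y⌋ : ℝ) + (Int.fract y + c) := by
    have := Int.floor_add_fract y
    linarith
  rw [he, Int.floor_intCast_add, Int.floor_eq_zero_iff.mpr ⟨h1, h2⟩, add_zero]

lemma beta_cube_small : fβ^3 < 1/4 := by
  have h2 : fβ^2 < 0.382 := by nlinarith [beta_ub, beta_pos]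
  have h3 : fβ^3 = fβ^2 * fβ := by ring
  nlinarith [beta_ub, beta_pos, h2]

lemma beta_pow3_le (k : ℕ) : fβ^(k+3) ≤ fβ^3 := by
  apply pow_le_pow_of_le_one (le_of_lt beta_pos) (le_of_lt beta_lt_one)
  omega

lemma beta_pow_succ_lt (k : ℕ) : fβ^(k+3) < fβ^(k+2) := by
  have h : fβ^(k+3) = fβ^(k+2) * fβ := by ring
  nlinarith [pow_pos beta_pos (k+2), beta_lt_one, beta_pos]

lemma floor_shift (k r : ℕ) (hr1 : 1 ≤ r) (hr2 : r ≤ Nat.fib (k+2) + 1) :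
    ⌊((Nat.fib (k+3) + r : ℕ) : ℝ) * fα⌋ = (Nat.fib (k+1) : ℤ) + ⌊(r:ℝ) * fα⌋ := by
  have hId : (Nat.fib (k+3) : ℝ) * fα = (Nat.fib (k+1) : ℝ) + (-fβ)^(k+3) := fibId (k+1)
  have hcast : ((Nat.fib (k+3) + r : ℕ) : ℝ) * fα
      = ((Nat.fib (k+1) : ℤ) : ℝ) + ((r:ℝ)*fα + (-fβ)^(k+3)) := by
    push_cast
    linear_combination hId
  rw [hcast, Int.floor_intCast_add]
  congr 1
  set ψv := (-fβ)^(k+3) with hψv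
  set u := Int.fract ((r:ℝ)*fα) with hu
  have hu0 : 0 ≤ u := Int.fract_nonneg _
  have hu1 : u < 1 := Int.fract_lt_one _
  have hψb : fβ^(k+3) ≤ fβ^3 := beta_pow3_le k
  have hψb2 : fβ^(k+3) < fβ^(k+2) := beta_pow_succ_lt k
  have hpow3 : (0:ℝ) < fβ^(k+3) := pow_pos beta_pos _
  have hpowc : fβ^3 < 1/4 := beta_cube_small
  have hψcases : ψv = fβ^(k+3) ∨ ψv = -fβ^(k+3) := by
    rcases Nat.even_or_odd (k+3) with hp | hp
    · left; rw [hψv]; exact hp.neg_pow fβ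
    · right; rw [hψv]; exact hp.neg_pow fβ
  have hfle : Nat.fib (k+2) + 1 ≤ Nat.fib (k+3) := by
    have h := Nat.fib_add_two (n := k+1)
    have e : Nat.fib (k+1+2) = Nat.fib (k+3) := rfl
    have e2 : Nat.fib (k+1+1) = Nat.fib (k+2) := rfl
    have : 1 ≤ Nat.fib (k+1) := Nat.fib_pos.mpr (by omega)
    omega
  have key : 0 ≤ u + ψv ∧ u + ψv < 1 := by
    rcases Nat.lt_or_ge r (Nat.fib (k+3)) with hrc | hrc
    · have hb1 := BAL (k+2) (by omega) r hr1 hrc ⌊(r:ℝ)*fα⌋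
      have hb2 := BAL (k+2) (by omega) r hr1 hrc (⌊(r:ℝ)*fα⌋ + 1)
      have he1 : (r:ℝ)*fα - ((⌊(r:ℝ)*fα⌋ : ℤ) : ℝ) = u := rfl
      have he2 : |(r:ℝ)*fα - ((⌊(r:ℝ)*fα⌋ : ℤ) : ℝ)| = u := by rw [he1]; exact abs_of_nonneg hu0
      have he3 : |(r:ℝ)*fα - ((⌊(r:ℝ)*fα⌋ + 1 : ℤ) : ℝ)| = 1 - u := by
        have h' : (r:ℝ)*fα - ((⌊(r:ℝ)*fα⌋ + 1 : ℤ) : ℝ) = u - 1 := by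
          push_cast
          rw [← he1]; push_cast; ring
        rw [h', abs_of_nonpos (by linarith)]; ring
      rw [he2] at hb1
      rw [he3] at hb2
      rcases hψcases with hs | hs <;> rw [hs] <;> constructor <;> linarith
    · have hreq : r = Nat.fib (k+3) := by omega
      have hrα : (r:ℝ)*fα = ((Nat.fib (k+1) : ℤ) : ℝ) + ψv := by
        rw [hreq]; push_cast; linear_combination hId
      have hufr : u = Int.fract ψv := by
        rw [hu, hrα, Int.fract_intCast_add]
      rcases hψcases with hs | hs
      · have hfr : Int.fract ψv = ψv := by
          rw [Int.fract_eq_self]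
          constructor
          · rw [hs]; linarith
          · rw [hs]; linarith
        rw [hufr, hfr, hs]
        constructor <;> linarith
      · have hfr : Int.fract ψv = 1 + ψv := by
          have h1' : Int.fract ψv = Int.fract ((1:ℤ) + ψv) := (Int.fract_intCast_add 1 ψv).symm
          rw [h1', Int.fract_eq_self.mpr ?_]
          · push_cast; ring
          · constructor
            · push_cast; rw [hs]; linarith
            · push_cast; rw [hs]; linarith
        rw [hufr, hfr, hs]
        constructor <;> linarith
  exact floor_aux _ _ key.1 key.2

lemma floor_small (c : ℕ) (z : ℤ) (h1 : (z:ℝ) ≤ (c:ℝ)*fα) (h2 : (c:ℝ)*fα < z+1) :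
    ⌊(c:ℝ)*fα⌋ = z := Int.floor_eq_iff.mpr ⟨h1, h2⟩

lemma bridge_aux : ∀ k, ∀ i, i < Nat.fib (k+2) →
    ((fibS k).getD i 0 : ℤ) = ⌊((i+2:ℕ):ℝ)*fα⌋ - ⌊((i+1:ℕ):ℝ)*fα⌋ := by
  have fl1 : ⌊((1:ℕ):ℝ)*fα⌋ = 0 := by
    apply floor_small <;> push_cast <;> nlinarith [alpha_lb, alpha_ub]
  have fl2 : ⌊((2:ℕ):ℝ)*fα⌋ = 0 := by
    apply floor_small <;> push_cast <;> nlinarith [alpha_lb, alpha_ub]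
  have fl3 : ⌊((3:ℕ):ℝ)*fα⌋ = 1 := by
    apply floor_small <;> push_cast <;> nlinarith [alpha_lb, alpha_ub]
  intro k
  induction k using Nat.twoStepInduction with
  | zero =>
      intro i hi
      have hf : Nat.fib (0+2) = 1 := rfl
      obtain rfl : i = 0 := by omega
      have e2 : (0:ℕ)+2 = 2 := rfl
      have e1 : (0:ℕ)+1 = 1 := rfl
      rw [e2, e1, fl2, fl1]
      rfl
  | one =>
      intro i hi
      have hf : Nat.fib (1+2) = 2 := rfl
      have hi2 : i = 0 ∨ i = 1 := by omega
      rcases hi2 with rfl | rfl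
      · have e2 : (0:ℕ)+2 = 2 := rfl
        have e1 : (0:ℕ)+1 = 1 := rfl
        rw [e2, e1, fl2, fl1]
        rfl
      · have e2 : (1:ℕ)+2 = 3 := rfl
        have e1 : (1:ℕ)+1 = 2 := rfl
        rw [e2, e1, fl3, fl2]
        rfl
  | more k ih2 ih1 =>
      intro i hi
      rw [fibS_succ_succ k]
      have hlen1 : (fibS (k+1)).length = Nat.fib (k+3) := fibS_length (k+1)
      have hfib4 : Nat.fib (k+2+2) = Nat.fib (k+2) + Nat.fib (k+3) := by
        have h := Nat.fib_add_two (n := k+2)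
        have e : Nat.fib (k+2+1) = Nat.fib (k+3) := rfl
        omega
      rcases Nat.lt_or_ge i (Nat.fib (k+3)) with hc | hc
      · rw [List.getD_append _ _ _ _ (by omega)]
        exact ih1 i hc
      · rw [List.getD_append_right _ _ _ _ (by omega)]
        set j := i - (fibS (k+1)).length with hj
        have hj2 : i = Nat.fib (k+3) + j := by omega
        have hjlt : j < Nat.fib (k+2) := by omega
        have e1 : i + 2 = Nat.fib (k+3) + (j+2) := by omega
        have e2 : i + 1 = Nat.fib (k+3) + (j+1) := by omega
        rw [e1, e2, floor_shift k (j+2) (by omega) (by omega),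
            floor_shift k (j+1) (by omega) (by omega)]
        have := ih2 j hjlt
        omega

lemma bridge (i : ℕ) :
    (fibWord i : ℤ) = ⌊((i+2:ℕ):ℝ)*fα⌋ - ⌊((i+1:ℕ):ℝ)*fα⌋ := by
  have h : i < Nat.fib (i+2+2) := by
    have := fib_ge (i+2)
    omega
  rw [fibWord_eq_fibS h]
  exact bridge_aux (i+2) i h

lemma fract_shift (x y : ℝ) : Int.fract (x + y) = Int.fract (Int.fract x + y) := by
  have he : Int.fract x + y = (x + y) - (⌊x⌋ : ℤ) := by
    have := Int.floor_add_fract x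
    push_cast
    linarith
  rw [he, Int.fract_sub_intCast]

lemma fract_lo (w : ℝ) (h0 : 0 ≤ w) (h1 : w < 1) : Int.fract w = w :=
  Int.fract_eq_self.mpr ⟨h0, h1⟩

lemma fract_hi (w : ℝ) (h0 : 1 ≤ w) (h1 : w < 2) : Int.fract w = w - 1 := by
  have h := Int.fract_sub_intCast w 1
  have e : w - ((1:ℤ):ℝ) = w - 1 := by push_cast; ring
  rw [e] at h
  rw [← h]
  exact fract_lo _ (by linarith) (by linarith)

lemma exists_fib_between : ∀ n : ℕ, 1 ≤ n →
    ∃ m, 2 ≤ m ∧ Nat.fib m ≤ n ∧ n < Nat.fib (m+1) := by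
  intro n hn
  induction n with
  | zero => omega
  | succ n ih =>
      rcases Nat.eq_zero_or_pos n with rfl | hpos
      · exact ⟨2, by omega, by decide, by decide⟩
      · obtain ⟨m, hm2, hm1, hmU⟩ := ih hpos
        rcases Nat.lt_or_ge (n+1) (Nat.fib (m+1)) with hc | hc
        · exact ⟨m, hm2, by omega, hc⟩
        · have heq : n + 1 = Nat.fib (m+1) := by omega
          refine ⟨m+1, by omega, by omega, ?_⟩
          have h1 : Nat.fib (m+2) = Nat.fib m + Nat.fib (m+1) := Nat.fib_add_two
          have h2 : 1 ≤ Nat.fib m := Nat.fib_pos.mpr (by omega)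
          have h3 : Nat.fib (m+1+1) = Nat.fib (m+2) := rfl
          omega

/-- For n ≥ 1, the Fibonacci word contains a cube of order n iff n is a
Fibonacci number F_m with m ≥ 4. -/
theorem fibWord_cube_orders :
    ∀ n : ℕ, 1 ≤ n →
      ((∃ i : ℕ, ∀ t < 2 * n, fibWord (i + t) = fibWord (i + n + t)) ↔
        ∃ m : ℕ, 4 ≤ m ∧ n = Nat.fib m) := by
  intro n hn
  constructor
  · rintro ⟨i, h⟩
    -- convert to floor form
    have hD : ∀ s, s ≤ 2*n →
        ⌊((i+1+s+n:ℕ):ℝ)*fα⌋ - ⌊((i+1+s:ℕ):ℝ)*fα⌋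
          = ⌊((i+1+n:ℕ):ℝ)*fα⌋ - ⌊((i+1:ℕ):ℝ)*fα⌋ := by
      intro s
      induction s with
      | zero => intro _; rfl
      | succ s ih =>
          intro hs
          have hprev := ih (by omega)
          have hh := h s (by omega)
          have hhz : (fibWord (i+s) : ℤ) = (fibWord (i+n+s) : ℤ) := by exact_mod_cast hh
          rw [bridge (i+s), bridge (i+n+s)] at hhz
          have e1 : i+s+2 = i+1+(s+1) := by omega
          have e2 : i+s+1 = i+1+s := by omega
          have e3 : i+n+s+2 = i+1+(s+1)+n := by omega
          have e4 : i+n+s+1 = i+1+s+n := by omega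
          rw [e1, e2, e3, e4] at hhz
          omega
    have hformula : ∀ j : ℕ, ⌊((j+n:ℕ):ℝ)*fα⌋
        = ⌊(j:ℝ)*fα⌋ + ⌊(n:ℝ)*fα⌋ + ⌊Int.fract ((j:ℝ)*fα) + Int.fract ((n:ℝ)*fα)⌋ := by
      intro j
      have h1 := Int.floor_add_fract ((j:ℝ)*fα)
      have h2 := Int.floor_add_fract ((n:ℝ)*fα)
      have he : ((j+n:ℕ):ℝ)*fα = ((⌊(j:ℝ)*fα⌋ + ⌊(n:ℝ)*fα⌋ : ℤ):ℝ)
          + (Int.fract ((j:ℝ)*fα) + Int.fract ((n:ℝ)*fα)) := by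
        push_cast
        linarith
      rw [he, Int.floor_intCast_add]
    have hEs : ∀ s, s ≤ 2*n →
        ⌊Int.fract (((i+1+s:ℕ):ℝ)*fα) + Int.fract ((n:ℝ)*fα)⌋
          = ⌊Int.fract (((i+1:ℕ):ℝ)*fα) + Int.fract ((n:ℝ)*fα)⌋ := by
      intro s hs
      have h1 := hD s hs
      have h2 := hformula (i+1+s)
      have h3 := hformula (i+1)
      omega
    have hθ0 : 0 ≤ Int.fract ((n:ℝ)*fα) := Int.fract_nonneg _
    have hθ1 : Int.fract ((n:ℝ)*fα) < 1 := Int.fract_lt_one _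
    have hE01 : ⌊Int.fract (((i+1:ℕ):ℝ)*fα) + Int.fract ((n:ℝ)*fα)⌋ = 0 ∨
        ⌊Int.fract (((i+1:ℕ):ℝ)*fα) + Int.fract ((n:ℝ)*fα)⌋ = 1 := by
      have h0 : (0:ℤ) ≤ ⌊Int.fract (((i+1:ℕ):ℝ)*fα) + Int.fract ((n:ℝ)*fα)⌋ :=
        Int.floor_nonneg.mpr (add_nonneg (Int.fract_nonneg _) (Int.fract_nonneg _))
      have h1 : ⌊Int.fract (((i+1:ℕ):ℝ)*fα) + Int.fract ((n:ℝ)*fα)⌋ < 2 :=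
        Int.floor_lt.mpr (by
          rw [show ((2:ℤ):ℝ) = 2 by norm_num]
          linarith [Int.fract_lt_one (((i+1:ℕ):ℝ)*fα)])
      omega
    -- set up the step recursion for fract values
    have hstep : ∀ s : ℕ, Int.fract (((i+1+(s+1):ℕ):ℝ)*fα)
        = Int.fract (Int.fract (((i+1+s:ℕ):ℝ)*fα) + fα) := by
      intro s
      have e : ((i+1+(s+1):ℕ):ℝ) * fα = ((i+1+s:ℕ):ℝ)*fα + fα := by push_cast; ring
      rw [e, fract_shift]
    have hu0' : ∀ s : ℕ, 0 ≤ Int.fract (((i+1+s:ℕ):ℝ)*fα) := fun s => Int.fract_nonneg _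
    have hu1' : ∀ s : ℕ, Int.fract (((i+1+s:ℕ):ℝ)*fα) < 1 := fun s => Int.fract_lt_one _
    have hα1 := alpha_lb
    have hα2 := alpha_ub
    obtain ⟨m, hm2, hmL, hmU⟩ := exists_fib_between n hn
    rcases Nat.lt_or_ge m 4 with hm4 | hm4
    · -- small cases : n = 1 or n = 2, derive contradiction
      exfalso
      have hn12 : n = 1 ∨ n = 2 := by
        interval_cases m
        · left
          have e1 : Nat.fib (2+1) = 2 := rfl
          omega
        · right
          have e1 : Nat.fib 3 = 2 := rfl
          have e2 : Nat.fib (3+1) = 3 := rfl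
          omega
      rcases hn12 with rfl | rfl
      · -- n = 1
        have hθ : Int.fract (((1:ℕ):ℝ)*fα) = fα := by
          push_cast
          rw [one_mul]
          exact fract_lo _ (by linarith) (by linarith)
        rcases hE01 with hE | hE
        · have hlt : ∀ s, s ≤ 2 → Int.fract (((i+1+s:ℕ):ℝ)*fα) + fα < 1 := by
            intro s hs
            have := hEs s hs
            rw [hE, hθ] at this
            have := (Int.floor_eq_zero_iff.mp this).2
            linarith
          have h0 := hlt 0 (by omega)
          have hu1 : Int.fract (((i+1+1:ℕ):ℝ)*fα)
              = Int.fract (((i+1+0:ℕ):ℝ)*fα) + fα := by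
            rw [hstep 0]
            exact fract_lo _ (by linarith [hu0' 0]) h0
          have h1 := hlt 1 (by omega)
          rw [hu1] at h1
          have hu2 : Int.fract (((i+1+2:ℕ):ℝ)*fα)
              = Int.fract (((i+1+0:ℕ):ℝ)*fα) + fα + fα := by
            rw [hstep 1, hu1]
            exact fract_lo _ (by linarith [hu0' 0]) h1
          have h2 := hlt 2 (by omega)
          rw [hu2] at h2
          linarith [hu0' 0]
        · have hge : ∀ s, s ≤ 2 → 1 ≤ Int.fract (((i+1+s:ℕ):ℝ)*fα) + fα := by
            intro s hs
            have h' := hEs s hs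
            rw [hE, hθ] at h'
            have := Int.le_floor.mp (le_of_eq h'.symm)
            rw [Int.cast_one] at this
            linarith
          have h0 := hge 0 (by omega)
          have hu1 : Int.fract (((i+1+1:ℕ):ℝ)*fα)
              = Int.fract (((i+1+0:ℕ):ℝ)*fα) + fα - 1 := by
            rw [hstep 0]
            exact fract_hi _ h0 (by linarith [hu1' 0])
          have h1 := hge 1 (by omega)
          rw [hu1] at h1
          linarith [hu1' 0]
      · -- n = 2
        have hθ : Int.fract (((2:ℕ):ℝ)*fα) = fα + fα := by
          push_cast
          rw [show (2:ℝ)*fα = fα + fα by ring]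
          exact fract_lo _ (by linarith) (by linarith)
        rcases hE01 with hE | hE
        · have hlt : ∀ s, s ≤ 4 → Int.fract (((i+1+s:ℕ):ℝ)*fα) + (fα + fα) < 1 := by
            intro s hs
            have h' := hEs s hs
            rw [hE, hθ] at h'
            have := (Int.floor_eq_zero_iff.mp h').2
            linarith
          have h0 := hlt 0 (by omega)
          have hu1 : Int.fract (((i+1+1:ℕ):ℝ)*fα)
              = Int.fract (((i+1+0:ℕ):ℝ)*fα) + fα := by
            rw [hstep 0]
            exact fract_lo _ (by linarith [hu0' 0]) (by linarith)
          have h1 := hlt 1 (by omega)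
          rw [hu1] at h1
          linarith [hu0' 0]
        · have hge : ∀ s, s ≤ 4 → 1 ≤ Int.fract (((i+1+s:ℕ):ℝ)*fα) + (fα + fα) := by
            intro s hs
            have h' := hEs s hs
            rw [hE, hθ] at h'
            have := Int.le_floor.mp (le_of_eq h'.symm)
            rw [Int.cast_one] at this
            linarith
          have h0 := hge 0 (by omega)
          have h1 := hge 1 (by omega)
          have h2 := hge 2 (by omega)
          have h3 := hge 3 (by omega)
          have h4 := hge 4 (by omega)
          set u0 := Int.fract (((i+1+0:ℕ):ℝ)*fα) with hu0def
          rcases lt_or_ge (u0 + fα) 1 with hw0 | hw0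
          · -- case A : no wrap at step 0
            have hu1 : Int.fract (((i+1+1:ℕ):ℝ)*fα) = u0 + fα := by
              rw [hstep 0]
              exact fract_lo _ (by linarith [hu0' 0]) hw0
            rcases lt_or_ge (u0 + fα + fα) 1 with hw1 | hw1
            · -- A1 : contradiction with h0
              rw [hu1] at h1
              linarith
            · have hu2 : Int.fract (((i+1+2:ℕ):ℝ)*fα) = u0 + fα + fα - 1 := by
                rw [hstep 1, hu1]
                exact fract_hi _ hw1 (by linarith [hu0' 0])
              rw [hu2] at h2
              rcases lt_or_ge (u0 + fα + fα + fα - 1) 1 with hw2 | hw2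
              · have hu3 : Int.fract (((i+1+3:ℕ):ℝ)*fα) = u0 + fα + fα + fα - 1 := by
                  rw [hstep 2, hu2]
                  have e : u0 + fα + fα - 1 + fα = u0 + fα + fα + fα - 1 := by ring
                  rw [e]
                  exact fract_lo _ (by linarith) hw2
                have hw3 : 1 ≤ u0 + fα + fα + fα - 1 + fα := by linarith
                have hu4 : Int.fract (((i+1+4:ℕ):ℝ)*fα) = u0 + fα + fα + fα + fα - 2 := by
                  rw [hstep 3, hu3]
                  have e : u0 + fα + fα + fα - 1 + fα = u0 + fα + fα + fα + fα - 1 := by ring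
                  rw [e]
                  have := fract_hi (u0 + fα + fα + fα + fα - 1) (by linarith) (by linarith)
                  rw [this]; ring
                rw [hu4] at h4
                linarith
              · have hu3 : Int.fract (((i+1+3:ℕ):ℝ)*fα) = u0 + fα + fα + fα - 2 := by
                  rw [hstep 2, hu2]
                  have e : u0 + fα + fα - 1 + fα = u0 + fα + fα + fα - 1 := by ring
                  rw [e]
                  have := fract_hi (u0 + fα + fα + fα - 1) (by linarith) (by linarith [hu0' 0])
                  rw [this]; ring
                rw [hu3] at h3
                linarith [hu1' 0]
          · -- case B : wrap at step 0
            have hu1 : Int.fract (((i+1+1:ℕ):ℝ)*fα) = u0 + fα - 1 := by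
              rw [hstep 0]
              exact fract_hi _ hw0 (by linarith [hu1' 0])
            rw [hu1] at h1
            have hu2 : Int.fract (((i+1+2:ℕ):ℝ)*fα) = u0 + fα + fα - 1 := by
              rw [hstep 1, hu1]
              have e : u0 + fα - 1 + fα = u0 + fα + fα - 1 := by ring
              rw [e]
              exact fract_lo _ (by linarith) (by linarith [hu1' 0])
            have hu3 : Int.fract (((i+1+3:ℕ):ℝ)*fα) = u0 + fα + fα + fα - 2 := by
              rw [hstep 2, hu2]
              have e : u0 + fα + fα - 1 + fα = u0 + fα + fα + fα - 1 := by ring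
              rw [e]
              have := fract_hi (u0 + fα + fα + fα - 1) (by linarith) (by linarith [hu1' 0])
              rw [this]; ring
            rw [hu3] at h3
            linarith [hu1' 0]
    · -- main case : m ≥ 4
      obtain ⟨M, rfl⟩ : ∃ M, m = M + 4 := ⟨m - 4, by omega⟩
      have hwin : Nat.fib (M+5) ≤ 2*n + 1 := by
        have h1 : Nat.fib (M+5) = Nat.fib (M+3) + Nat.fib (M+4) := Nat.fib_add_two
        have h2 : Nat.fib (M+3) ≤ Nat.fib (M+4) := Nat.fib_mono (by omega)
        omega
      have hmL' : Nat.fib (M+4) ≤ n := hmL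
      have hmU' : n < Nat.fib (M+5) := hmU
      have hgoal : n = Nat.fib (M+4) := by
        have hθeq : (n:ℝ)*fα - (⌊(n:ℝ)*fα⌋ : ℝ) = Int.fract ((n:ℝ)*fα) := rfl
        rcases hE01 with hE | hE
        · -- all fracts below 1 - θ : θ must be small
          have hθle : Int.fract ((n:ℝ)*fα) ≤ fβ^(M+3) := by
            by_contra hgt
            push_neg at hgt
            obtain ⟨j, hj1, hj2, p, hp1, hp2⟩ := gap (M+2) (1 - Int.fract ((n:ℝ)*fα)) (i+1)
            have efib : Nat.fib (M+2+3) = Nat.fib (M+5) := rfl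
            rw [efib] at hj2
            have hfl : ⌊(j:ℝ)*fα⌋ = p := by
              apply Int.floor_eq_iff.mpr
              constructor
              · linarith
              · push_cast
                have e : (M+2)+1 = M+3 := rfl
                rw [e] at hp2
                linarith
            have hfr : 1 - Int.fract ((n:ℝ)*fα) ≤ Int.fract ((j:ℝ)*fα) := by
              have : Int.fract ((j:ℝ)*fα) = (j:ℝ)*fα - (⌊(j:ℝ)*fα⌋:ℝ) := rfl
              rw [this, hfl]
              linarith
            have hsle : j - (i+1) ≤ 2*n := by omega
            have hje : i+1+(j-(i+1)) = j := by omega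
            have h' := hEs (j-(i+1)) hsle
            rw [hE, hje] at h'
            have := (Int.floor_eq_zero_iff.mp h').2
            linarith
          have habs : |(n:ℝ)*fα - (⌊(n:ℝ)*fα⌋:ℝ)| ≤ fβ^(M+3) := by
            rw [hθeq, abs_of_nonneg hθ0]
            exact hθle
          exact uniq M n ⌊(n:ℝ)*fα⌋ hmL' hmU' habs
        · -- all fracts above 1 - θ : 1 - θ must be small
          have hθge : 1 - Int.fract ((n:ℝ)*fα) ≤ fβ^(M+3) := by
            by_contra hgt
            push_neg at hgt
            obtain ⟨j, hj1, hj2, p, hp1, hp2⟩ := gap (M+2) 0 (i+1)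
            have efib : Nat.fib (M+2+3) = Nat.fib (M+5) := rfl
            rw [efib] at hj2
            have e : (M+2)+1 = M+3 := rfl
            rw [e] at hp2
            have hfl : ⌊(j:ℝ)*fα⌋ = p := by
              apply Int.floor_eq_iff.mpr
              constructor
              · linarith
              · push_cast
                linarith [pow_pos beta_pos (M+3), hθ0]
            have hfr : Int.fract ((j:ℝ)*fα) ≤ fβ^(M+3) := by
              have h' : Int.fract ((j:ℝ)*fα) = (j:ℝ)*fα - (⌊(j:ℝ)*fα⌋:ℝ) := rfl
              rw [h', hfl]
              linarith
            have hsle : j - (i+1) ≤ 2*n := by omega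
            have hje : i+1+(j-(i+1)) = j := by omega
            have h' := hEs (j-(i+1)) hsle
            rw [hE, hje] at h'
            have := Int.le_floor.mp (le_of_eq h'.symm)
            rw [Int.cast_one] at this
            linarith
          have habs : |(n:ℝ)*fα - ((⌊(n:ℝ)*fα⌋ + 1 : ℤ):ℝ)| ≤ fβ^(M+3) := by
            have he : (n:ℝ)*fα - ((⌊(n:ℝ)*fα⌋ + 1 : ℤ):ℝ) = Int.fract ((n:ℝ)*fα) - 1 := by
              push_cast
              linarith [hθeq]
            rw [he, abs_of_nonpos (by linarith)]
            linarith
          exact uniq M n (⌊(n:ℝ)*fα⌋ + 1) hmL' hmU' habs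
      exact ⟨M+4, by omega, hgoal⟩
  · rintro ⟨m, hm, rfl⟩
    obtain ⟨b, rfl⟩ : ∃ b, m = b + 4 := ⟨m - 4, by omega⟩
    exact ⟨Nat.fib (b+5), fun t ht => exists_cube b t ht⟩
end

section
/- The infinite Fibonacci word f contains exactly four factors that are antisquares, namely 01, 10, 1001, and 10100101. -/
/-- An antisquare is a nonempty word of the form x x̄, where x̄ is the
bitwise complement of x. -/
def IsAntisquare (x : List ℕ) : Prop :=
  ∃ y : List ℕ, y ≠ [] ∧ x = y ++ y.map (fun c => 1 - c)

set_option maxRecDepth 10000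

def P (n : ℕ) : List ℕ := fibPhi^[n] [0]

lemma fibPhi_cons (c : ℕ) (w : List ℕ) :
    fibPhi (c :: w) = (if c = 0 then [0, 1] else [0]) ++ fibPhi w := by
  simp [fibPhi]

lemma P_succ (n : ℕ) : P (n + 1) = fibPhi (P n) := Function.iterate_succ_apply' _ _ _

lemma P_rec (n : ℕ) : P (n + 2) = P (n + 1) ++ P n := by
  induction n with
  | zero => rfl
  | succ n ih =>
    rw [P_succ (n+2), ih, fibPhi_append, ← P_succ, ← P_succ, ih]

lemma P_prefix_succ (n : ℕ) : P n <+: P (n + 1) := by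
  cases n with
  | zero => exact ⟨[1], rfl⟩
  | succ n => exact ⟨P n, (P_rec n).symm⟩

lemma P_prefix {n m : ℕ} (h : n ≤ m) : P n <+: P m := by
  induction m with
  | zero => rw [Nat.le_zero.mp h]
  | succ m ih =>
    rcases Nat.lt_or_ge n (m+1) with h' | h'
    · exact (ih (Nat.lt_succ_iff.mp h')).trans (P_prefix_succ m)
    · rw [Nat.le_antisymm h h']

lemma len_P : ∀ n, n + 1 ≤ (P n).length := by
  intro n
  induction n using Nat.strong_induction_on with
  | _ n ih =>
    match n with
    | 0 => decide
    | 1 => decide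
    | (n+2) =>
      rw [P_rec]
      have h1 := ih (n+1) (by omega)
      have h2 := ih n (by omega)
      rw [List.length_append]
      omega

lemma fibWord_eq {i m : ℕ} (h : i + 2 ≤ m) (d : ℕ) : fibWord i = (P m).getD i d := by
  have hi : i < (P (i+2)).length := by have := len_P (i+2); omega
  obtain ⟨t, ht⟩ := P_prefix h
  have : fibWord i = (P (i+2)).getD i 0 := rfl
  rw [this, ← ht, List.getD_append _ _ _ _ hi, List.getD_eq_getElem _ _ hi,
    List.getD_eq_getElem _ _ hi]

def only01 (w : List ℕ) : Prop := ∀ c ∈ w, c = 0 ∨ c = 1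

def has11 (w : List ℕ) : Prop := ∃ i, w.getD i 2 = 1 ∧ w.getD (i+1) 2 = 1

def has000 (w : List ℕ) : Prop :=
  ∃ i, w.getD i 2 = 0 ∧ w.getD (i+1) 2 = 0 ∧ w.getD (i+2) 2 = 0

def has10101 (w : List ℕ) : Prop :=
  ∃ i, w.getD i 2 = 1 ∧ w.getD (i+1) 2 = 0 ∧ w.getD (i+2) 2 = 1 ∧
    w.getD (i+3) 2 = 0 ∧ w.getD (i+4) 2 = 1

lemma has11_tail {c : ℕ} {w : List ℕ} (h : has11 w) : has11 (c :: w) := by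
  obtain ⟨i, h1, h2⟩ := h; exact ⟨i+1, h1, h2⟩

lemma has000_tail {c : ℕ} {w : List ℕ} (h : has000 w) : has000 (c :: w) := by
  obtain ⟨i, h1, h2, h3⟩ := h; exact ⟨i+1, h1, h2, h3⟩

lemma has10101_tail {c : ℕ} {w : List ℕ} (h : has10101 w) : has10101 (c :: w) := by
  obtain ⟨i, h1, h2, h3, h4, h5⟩ := h; exact ⟨i+1, h1, h2, h3, h4, h5⟩

lemma only01_tail {c : ℕ} {w : List ℕ} (h : only01 (c :: w)) : only01 w :=
  fun x hx => h x (List.mem_cons_of_mem _ hx)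

lemma fibPhi_head (w : List ℕ) : (fibPhi w).getD 0 2 ≠ 1 := by
  cases w with
  | nil => simp [fibPhi]
  | cons c w =>
    rw [fibPhi_cons]
    by_cases hc : c = 0 <;> simp [hc]

lemma no11 (w : List ℕ) : ¬ has11 (fibPhi w) := by
  induction w with
  | nil => rintro ⟨i, h1, h2⟩; simp [fibPhi] at h1
  | cons c w ih =>
    rw [fibPhi_cons]
    by_cases hc : c = 0 <;> simp only [hc, if_true, if_false] <;>
      rintro ⟨i, h1, h2⟩
    · match i with
      | 0 => simp at h1
      | 1 => exact fibPhi_head w (by simpa using h2)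
      | (i+2) => exact ih ⟨i, by simpa using h1, by simpa using h2⟩
    · match i with
      | 0 => simp at h1
      | (i+1) => exact ih ⟨i, by simpa using h1, by simpa using h2⟩

lemma fibPhi_second {w : List ℕ} (h : (fibPhi w).getD 1 2 = 1) : ∃ v, w = 0 :: v := by
  cases w with
  | nil => simp [fibPhi] at h
  | cons c w =>
    by_cases hc : c = 0
    · exact ⟨w, by rw [hc]⟩
    · rw [fibPhi_cons, if_neg hc] at h
      simp only [List.cons_append, List.nil_append, List.getD_cons_succ] at h
      exact absurd h (fibPhi_head w)

lemma no000 (w : List ℕ) (h01 : only01 w) (h11 : ¬ has11 w) : ¬ has000 (fibPhi w) := by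
  induction w with
  | nil => rintro ⟨i, h1, h2, h3⟩; simp [fibPhi] at h1
  | cons c w ih =>
    rw [fibPhi_cons]
    by_cases hc : c = 0 <;> simp only [hc, if_true, if_false] <;>
      rintro ⟨i, h1, h2, h3⟩
    · match i with
      | 0 => simp at h2
      | 1 => simp at h1
      | (i+2) =>
        exact ih (only01_tail h01) (fun h => h11 (has11_tail h))
          ⟨i, by simpa using h1, by simpa using h2, by simpa using h3⟩
    · match i with
      | 0 =>
        simp only [List.cons_append, List.nil_append, List.getD_cons_succ] at h2 h3
        cases w with
        | nil => simp [fibPhi] at h2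
        | cons c' w' =>
          by_cases hc' : c' = 0
          · rw [hc', fibPhi_cons, if_pos rfl] at h3; simp at h3
          · have hcv : c = 1 := (h01 c (by simp)).resolve_left hc
            have hcv' : c' = 1 := (h01 c' (by simp)).resolve_left hc'
            exact h11 ⟨0, by simp [hcv], by simp [hcv']⟩
      | (i+1) =>
        exact ih (only01_tail h01) (fun h => h11 (has11_tail h))
          ⟨i, by simpa using h1, by simpa using h2, by simpa using h3⟩

lemma no10101 (w : List ℕ) (h000 : ¬ has000 w) : ¬ has10101 (fibPhi w) := by
  induction w with
  | nil => rintro ⟨i, h1, _⟩; simp [fibPhi] at h1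
  | cons c w ih =>
    rw [fibPhi_cons]
    by_cases hc : c = 0 <;> simp only [hc, if_true, if_false] <;>
      rintro ⟨i, h1, h2, h3, h4, h5⟩
    · match i with
      | 0 => simp at h1
      | 1 =>
        simp only [List.cons_append, List.nil_append, List.getD_cons_succ] at h2 h3 h4 h5
        obtain ⟨v, hv⟩ := fibPhi_second h3
        rw [hv, fibPhi_cons, if_pos rfl] at h5
        simp only [List.cons_append, List.nil_append, List.getD_cons_succ] at h5
        obtain ⟨v', hv'⟩ := fibPhi_second h5
        exact h000 ⟨0, by simp [hc], by simp [hv], by simp [hv, hv']⟩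
      | (i+2) =>
        exact ih (fun h => h000 (has000_tail h))
          ⟨i, by simpa using h1, by simpa using h2, by simpa using h3,
            by simpa using h4, by simpa using h5⟩
    · match i with
      | 0 => simp at h1
      | (i+1) =>
        exact ih (fun h => h000 (has000_tail h))
          ⟨i, by simpa using h1, by simpa using h2, by simpa using h3,
            by simpa using h4, by simpa using h5⟩

lemma only01_fibPhi (w : List ℕ) : only01 (fibPhi w) := by
  intro x hx
  simp only [fibPhi, List.mem_flatten, List.mem_map] at hx
  obtain ⟨l, ⟨c, _, rfl⟩, hxl⟩ := hx
  by_cases hc : c = 0 <;> simp [hc] at hxl <;> tauto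

lemma P_facts (n : ℕ) :
    only01 (P n) ∧ ¬ has11 (P n) ∧ ¬ has000 (P n) ∧ ¬ has10101 (P n) := by
  induction n with
  | zero =>
    refine ⟨by intro c hc; simp [P] at hc; omega, ?_, ?_, ?_⟩
    · rintro ⟨i, h1, _⟩
      match i with
      | 0 => simp [P] at h1
      | (i+1) => simp [P, List.getD] at h1
    · rintro ⟨i, _, h2, _⟩
      match i with
      | 0 => simp [P, List.getD] at h2
      | (i+1) => simp [P, List.getD] at h2
    · rintro ⟨i, h1, _⟩
      match i with
      | 0 => simp [P] at h1
      | (i+1) => simp [P, List.getD] at h1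
  | succ n ih =>
    obtain ⟨h01, h11, h000, _⟩ := ih
    rw [P_succ]
    exact ⟨only01_fibPhi _, no11 _, no000 _ h01 h11, no10101 _ h000⟩

lemma fw_no11 (i : ℕ) : ¬ (fibWord i = 1 ∧ fibWord (i+1) = 1) := by
  rintro ⟨h1, h2⟩
  exact (P_facts (i+3)).2.1 ⟨i, by rw [← fibWord_eq (by omega) 2]; exact h1,
    by rw [← fibWord_eq (by omega) 2]; exact h2⟩

lemma fw_no10101 (i : ℕ) : ¬ (fibWord i = 1 ∧ fibWord (i+1) = 0 ∧ fibWord (i+2) = 1 ∧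
    fibWord (i+3) = 0 ∧ fibWord (i+4) = 1) := by
  rintro ⟨h1, h2, h3, h4, h5⟩
  exact (P_facts (i+6)).2.2.2 ⟨i,
    by rw [← fibWord_eq (by omega) 2]; exact h1,
    by rw [← fibWord_eq (by omega) 2]; exact h2,
    by rw [← fibWord_eq (by omega) 2]; exact h3,
    by rw [← fibWord_eq (by omega) 2]; exact h4,
    by rw [← fibWord_eq (by omega) 2]; exact h5⟩

lemma fw_binary (i : ℕ) : fibWord i = 0 ∨ fibWord i = 1 := by
  have hi : i < (P (i+2)).length := by have := len_P (i+2); omega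
  have : fibWord i = (P (i+2))[i] := List.getD_eq_getElem _ _ hi
  rw [this]
  exact (P_facts (i+2)).1 _ (List.getElem_mem _)

lemma fw_small {t : ℕ} (h : t < 100) : fibWord t = (P 10).getD t 2 := by
  have h1 : fibWord t = (P (t + 102)).getD t 2 := fibWord_eq (by omega) 2
  obtain ⟨s, hs⟩ := P_prefix (show 10 ≤ t + 102 by omega)
  have hlen : t < (P 10).length := by
    have : (P 10).length = 144 := by decide
    omega
  rw [h1, ← hs, List.getD_append _ _ _ _ hlen]

lemma fw_vals : fibWord 0 = 0 ∧ fibWord 1 = 1 ∧ fibWord 2 = 0 ∧ fibWord 3 = 0 ∧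
    fibWord 4 = 1 ∧ fibWord 12 = 1 ∧ fibWord 13 = 0 ∧ fibWord 14 = 1 ∧ fibWord 15 = 0 ∧
    fibWord 16 = 0 ∧ fibWord 17 = 1 ∧ fibWord 18 = 0 ∧ fibWord 19 = 1 := by
  refine ⟨?_, ?_, ?_, ?_, ?_, ?_, ?_, ?_, ?_, ?_, ?_, ?_, ?_⟩ <;>
    rw [fw_small (by omega)] <;> decide


lemma window_getD (f : ℕ → ℕ) {m t : ℕ} (ht : t < m) (d : ℕ) :
    ((List.range m).map f).getD t d = f t := by
  rw [List.getD_eq_getElem _ _ (by simpa using ht)]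
  simp

/-- The Fibonacci word contains exactly four antisquare factors:
01, 10, 1001, and 10100101. -/
theorem fibWord_antisquares :
    {x : List ℕ | IsFibFactor x ∧ IsAntisquare x} =
      {[0, 1], [1, 0], [1, 0, 0, 1], [1, 0, 1, 0, 0, 1, 0, 1]} := by
  obtain ⟨e0, e1, e2, e3, e4, e12, e13, e14, e15, e16, e17, e18, e19⟩ := fw_vals
  ext x
  simp only [Set.mem_setOf_eq, Set.mem_insert_iff, Set.mem_singleton_iff]
  constructor
  · rintro ⟨⟨i, hx⟩, y, hy, hxy⟩
    have hn : 1 ≤ y.length := List.length_pos_iff.mpr hy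
    set n := y.length with hndef
    have hxlen : x.length = n + n := by rw [hxy]; simp [hndef]
    rw [hxlen] at hx
    have hw : (List.range (n+n)).map (fun t => fibWord (i + t)) =
        y ++ y.map (fun c => 1 - c) := hx.symm.trans hxy
    have hval : ∀ t, t < n + n →
        fibWord (i + t) = (y ++ y.map (fun c => 1 - c)).getD t 2 := by
      intro t ht
      have h' : ((List.range (n+n)).map (fun t => fibWord (i + t))).getD t 2 =
          (y ++ y.map (fun c => 1 - c)).getD t 2 := congrArg (fun l => l.getD t 2) hw
      rw [window_getD _ ht] at h'
      exact h'
    have G1 : ∀ t, t < n → fibWord (i + n + t) = 1 - fibWord (i + t) := by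
      intro t ht
      have h1 := hval t (by omega)
      have h2 := hval (n + t) (by omega)
      rw [List.getD_append _ _ _ _ (by omega)] at h1
      rw [List.getD_append_right _ _ _ _ (by omega)] at h2
      have ht' : t < (y.map (fun c => 1 - c)).length := by simpa using ht
      rw [show n + t - y.length = t by omega, List.getD_eq_getElem _ _ ht',
        List.getElem_map] at h2
      rw [List.getD_eq_getElem _ _ (by omega)] at h1
      rw [show i + n + t = i + (n + t) by omega, h2, h1]
    have B := fw_binary
    have D1 : ∀ t, t + 1 < n → fibWord (i + t + 1) = 1 - fibWord (i + t) := by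
      intro t ht
      rcases B (i + t) with h0 | h0 <;> rcases B (i + t + 1) with h1 | h1
      · exfalso
        have g1 := G1 t (by omega)
        have g2 := G1 (t+1) (by omega)
        rw [h0] at g1
        rw [show i + (t+1) = i + t + 1 by omega, h1] at g2
        rw [show i + n + (t+1) = i + n + t + 1 by omega] at g2
        exact fw_no11 (i + n + t) ⟨g1, g2⟩
      · rw [h0, h1]
      · rw [h0, h1]
      · exact absurd ⟨h0, h1⟩ (fw_no11 (i + t))
    rcases (show n = 1 ∨ n = 2 ∨ n = 3 ∨ n = 4 ∨ 5 ≤ n by omega) with h | h | h | h | h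
    · -- n = 1
      rw [h] at hx G1
      have g0 := G1 0 (by omega)
      rw [show List.range (1+1) = [0, 1] from rfl] at hx
      simp only [List.map_cons, List.map_nil, Nat.add_zero] at hx g0
      rcases B i with h0 | h0 <;> rw [h0] at hx g0 <;> rw [g0] at hx
      · exact Or.inl hx
      · exact Or.inr (Or.inl hx)
    · -- n = 2
      rw [h] at hx G1 D1
      have a1 := D1 0 (by omega)
      have a2 := G1 0 (by omega)
      have a3 := G1 1 (by omega)
      simp only [Nat.add_zero] at a1 a2 a3
      rcases B i with h0 | h0
      · exfalso
        rw [h0] at a1 a2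
        refine fw_no11 (i + 1) ⟨a1, ?_⟩
        rw [show i + 1 + 1 = i + 2 by omega, a2]
      · rw [h0] at a1 a2
        rw [a1] at a3
        rw [h] at hxlen
        rw [show List.range (2+2) = [0, 1, 2, 3] from rfl] at hx
        simp only [List.map_cons, List.map_nil, Nat.add_zero] at hx
        rw [h0, show i + 1 = i + 0 + 1 by omega, a1, show i + 2 = i + 2 + 0 by omega, a2,
          show i + 3 = i + 2 + 1 by omega, a3] at hx
        exact Or.inr (Or.inr (Or.inl hx))
    · -- n = 3
      exfalso
      rw [h] at G1 D1
      have a1 := D1 0 (by omega)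
      have a2 := D1 1 (by omega)
      have a3 := G1 0 (by omega)
      have a4 := G1 1 (by omega)
      simp only [Nat.add_zero] at a1 a2 a3 a4
      rcases B i with h0 | h0
      · have a5 := G1 2 (by omega)
        rw [h0] at a1 a3
        rw [show i + 1 + 1 = i + 2 by omega] at a2
        rw [a1] at a2 a4
        rw [a2] at a5
        refine fw_no10101 (i + 1) ⟨a1, ?_, ?_, ?_, ?_⟩
        · rw [show i + 1 + 1 = i + 2 by omega, a2]
        · rw [show i + 1 + 2 = i + 3 + 0 by omega, a3]
        · rw [show i + 1 + 3 = i + 3 + 1 by omega, a4]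
        · rw [show i + 1 + 4 = i + 3 + 2 by omega, a5]
      · rw [h0] at a1 a3
        rw [show i + 1 + 1 = i + 2 by omega] at a2
        rw [a1] at a2 a4
        refine fw_no10101 i ⟨h0, ?_, ?_, ?_, ?_⟩
        · rw [show i + 1 = i + 1 by rfl, a1]
        · rw [a2]
        · rw [show i + 3 = i + 3 + 0 by omega, a3]
        · rw [show i + 4 = i + 3 + 1 by omega, a4]
    · -- n = 4
      rw [h] at hx G1 D1
      have a1 := D1 0 (by omega)
      have a2 := D1 1 (by omega)
      have a3 := D1 2 (by omega)
      have a4 := G1 0 (by omega)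
      have a5 := G1 1 (by omega)
      have a6 := G1 2 (by omega)
      have a7 := G1 3 (by omega)
      simp only [Nat.add_zero] at a1 a2 a3 a4 a5 a6 a7
      rw [show i + 1 + 1 = i + 2 by omega] at a2
      rw [show i + 2 + 1 = i + 3 by omega] at a3
      rcases B i with h0 | h0
      · exfalso
        rw [h0] at a1 a4
        rw [a1] at a2 a5
        rw [a2] at a3
        refine fw_no11 (i + 3) ⟨a3, ?_⟩
        rw [show i + 3 + 1 = i + 4 + 0 by omega, a4]
      · rw [h0] at a1 a4
        rw [a1] at a2 a5
        rw [a2] at a3 a6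
        rw [a3] at a7
        rw [show List.range (4+4) = [0, 1, 2, 3, 4, 5, 6, 7] from rfl] at hx
        simp only [List.map_cons, List.map_nil, Nat.add_zero] at hx
        rw [h0, a1, a2, a3, show i + 4 = i + 4 + 0 by omega, a4,
          show i + 5 = i + 4 + 1 by omega, a5, show i + 6 = i + 4 + 2 by omega, a6,
          show i + 7 = i + 4 + 3 by omega, a7] at hx
        exact Or.inr (Or.inr (Or.inr hx))
    · -- n ≥ 5
      exfalso
      have a1 := D1 0 (by omega)
      have a2 := D1 1 (by omega)
      have a3 := D1 2 (by omega)
      have a4 := D1 3 (by omega)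
      simp only [Nat.add_zero] at a1 a2 a3 a4
      rw [show i + 1 + 1 = i + 2 by omega] at a2
      rw [show i + 2 + 1 = i + 3 by omega] at a3
      rw [show i + 3 + 1 = i + 4 by omega] at a4
      rcases B i with h0 | h0
      · have b0 := G1 0 (by omega)
        have b1 := G1 1 (by omega)
        have b2 := G1 2 (by omega)
        have b3 := G1 3 (by omega)
        have b4 := G1 4 (by omega)
        simp only [Nat.add_zero] at b0
        rw [h0] at a1 b0
        rw [a1] at a2 b1
        rw [a2] at a3 b2
        rw [a3] at a4 b3
        rw [a4] at b4
        exact fw_no10101 (i + n) ⟨b0, b1, b2, b3, b4⟩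
      · rw [h0] at a1
        rw [a1] at a2
        rw [a2] at a3
        rw [a3] at a4
        exact fw_no10101 i ⟨h0, a1, a2, a3, a4⟩
  · rintro (rfl | rfl | rfl | rfl)
    · refine ⟨⟨0, ?_⟩, [0], by simp, rfl⟩
      rw [show List.range [0,1].length = [0, 1] from rfl]
      simp only [List.map_cons, List.map_nil, Nat.add_zero, Nat.zero_add]
      rw [e0, e1]
    · refine ⟨⟨1, ?_⟩, [1], by simp, rfl⟩
      rw [show List.range [1,0].length = [0, 1] from rfl]
      simp only [List.map_cons, List.map_nil, Nat.add_zero]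
      rw [e1, show (1:ℕ) + 1 = 2 from rfl, e2]
    · refine ⟨⟨1, ?_⟩, [1, 0], by simp, rfl⟩
      rw [show List.range [1,0,0,1].length = [0, 1, 2, 3] from rfl]
      simp only [List.map_cons, List.map_nil, Nat.add_zero]
      rw [e1, show (1:ℕ) + 1 = 2 from rfl, e2, show (1:ℕ) + 2 = 3 from rfl, e3,
        show (1:ℕ) + 3 = 4 from rfl, e4]
    · refine ⟨⟨12, ?_⟩, [1, 0, 1, 0], by simp, rfl⟩
      rw [show List.range [1,0,1,0,0,1,0,1].length = [0,1,2,3,4,5,6,7] from rfl]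
      simp only [List.map_cons, List.map_nil, Nat.add_zero]
      rw [e12, show (12:ℕ) + 1 = 13 from rfl, e13, show (12:ℕ) + 2 = 14 from rfl, e14,
        show (12:ℕ) + 3 = 15 from rfl, e15, show (12:ℕ) + 4 = 16 from rfl, e16,
        show (12:ℕ) + 5 = 17 from rfl, e17, show (12:ℕ) + 6 = 18 from rfl, e18,
        show (12:ℕ) + 7 = 19 from rfl, e19]
end
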